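/- For every real m > 0, the function g(σ) = m/σ + log(1+σ) on (0, ∞) attains its global minimum at σ* = (m + √(m² + 4m))/2; that is, for all σ > 0, m/σ + log(1+σ) ≥ m/σ* + log(1+σ*), with equality if and only if σ = σ*. -/

import Mathlib

open Real

/-- For `m > 0`, the function `g(σ) = m/σ + log(1+σ)` on `(0, ∞)` attains its global
minimum at `σ* = (m + √(m² + 4m))/2`: for all `σ > 0`,
`m/σ + log(1+σ) ≥ m/σ* + log(1+σ*)`, with equality iff `σ = σ*`. -/
theorem stmt_5 (m : ℝ) (hm : 0 < m) (σs : ℝ)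
    (hσs : σs = (m + Real.sqrt (m ^ 2 + 4 * m)) / 2) :
    ∀ σ : ℝ, 0 < σ →
      m / σs + Real.log (1 + σs) ≤ m / σ + Real.log (1 + σ) ∧
      (m / σ + Real.log (1 + σ) = m / σs + Real.log (1 + σs) ↔ σ = σs) := by
  have hm4 : (0:ℝ) ≤ m ^ 2 + 4 * m := by nlinarith
  have hsq : Real.sqrt (m ^ 2 + 4 * m) ^ 2 = m ^ 2 + 4 * m := Real.sq_sqrt hm4
  have hsqpos : 0 < Real.sqrt (m ^ 2 + 4 * m) := Real.sqrt_pos.2 (by nlinarith)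
  have hσspos : 0 < σs := by rw [hσs]; linarith
  have hroot : σs ^ 2 = m * σs + m := by rw [hσs]; nlinarith [hsq]
  have hsm : m < σs := by nlinarith
  set g : ℝ → ℝ := fun x => m / x + Real.log (1 + x) with hg
  have hderiv : ∀ x : ℝ, 0 < x →
      HasDerivAt g ((x ^ 2 - m * (1 + x)) / (x ^ 2 * (1 + x))) x := by
    intro x hx
    have hx1 : (0:ℝ) < 1 + x := by linarith
    have h1 : HasDerivAt (fun y : ℝ => m / y) (m * (-(x ^ 2)⁻¹)) x := by
      simpa [div_eq_mul_inv] using (hasDerivAt_inv hx.ne').const_mul m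
    have h2 : HasDerivAt (fun y : ℝ => Real.log (1 + y)) (1 / (1 + x)) x := by
      have hid : HasDerivAt (fun y : ℝ => 1 + y) 1 x := (hasDerivAt_id x).const_add 1
      simpa using hid.log hx1.ne'
    have := h1.add h2
    refine this.congr_deriv ?_
    field_simp
    ring
  have hanti : ∀ a b : ℝ, 0 < a → a < b → b ≤ σs → g b < g a := by
    intro a b ha hab hb
    have : StrictAntiOn g (Set.Icc a b) := by
      apply strictAntiOn_of_deriv_neg (convex_Icc a b)
      · intro x hx
        exact ((hderiv x (lt_of_lt_of_le ha hx.1)).differentiableAt.continuousAt).continuousWithinAt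
      · intro x hx
        rw [interior_Icc] at hx
        have hxpos : 0 < x := lt_trans ha hx.1
        have hx1 : (0:ℝ) < 1 + x := by linarith
        have hxs : x < σs := lt_of_lt_of_le hx.2 hb
        rw [(hderiv x hxpos).deriv]
        apply div_neg_of_neg_of_pos
        · nlinarith
        · positivity
    exact this (Set.left_mem_Icc.2 hab.le) (Set.right_mem_Icc.2 hab.le) hab
  have hmono : ∀ a b : ℝ, σs ≤ a → a < b → g a < g b := by
    intro a b ha hab
    have : StrictMonoOn g (Set.Icc a b) := by
      apply strictMonoOn_of_deriv_pos (convex_Icc a b)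
      · intro x hx
        exact ((hderiv x (lt_of_lt_of_le (lt_of_lt_of_le hσspos ha) hx.1)).differentiableAt.continuousAt).continuousWithinAt
      · intro x hx
        rw [interior_Icc] at hx
        have hxs : σs < x := lt_of_le_of_lt ha hx.1
        have hxpos : 0 < x := lt_trans hσspos hxs
        have hx1 : (0:ℝ) < 1 + x := by linarith
        rw [(hderiv x hxpos).deriv]
        apply div_pos
        · nlinarith
        · positivity
    exact this (Set.left_mem_Icc.2 hab.le) (Set.right_mem_Icc.2 hab.le) hab
  intro σ hσ
  rcases lt_trichotomy σ σs with h | h | h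
  · have := hanti σ σs hσ h le_rfl
    constructor
    · exact this.le
    · constructor
      · intro he; exact absurd he (ne_of_gt this)
      · intro he; rw [he]
  · subst h; exact ⟨le_rfl, by simp⟩
  · have := hmono σs σ le_rfl h
    constructor
    · exact this.le
    · constructor
      · intro he; exact absurd he (ne_of_gt this)
      · intro he; rw [he]
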